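/- Let (H, M) be a Banach module and let G be a Banach space continuously embedded in H such that for each M ∈ M the restriction of M to G is a compact operator from G to H. If R ∈ B₀ˡ(H,H) and the range of R is contained in G, then R is a compact operator on H. -/

import Mathlib

open ContinuousLinearMap

noncomputable section

variable {H K : Type*}

/-- `M` is the multiplier algebra of a Banach module structure on `H`: a non-degenerate
norm-closed subalgebra of `B(H)` possessing a bounded approximate unit. -/
structure IsBanachModule (H : Type*) [NormedAddCommGroup H] [NormedSpace ℂ H]
    (M : Set (H →L[ℂ] H)) : Prop where
  zero_mem : (0 : H →L[ℂ] H) ∈ M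
  add_mem : ∀ {A B : H →L[ℂ] H}, A ∈ M → B ∈ M → A + B ∈ M
  smul_mem : ∀ (c : ℂ) {A : H →L[ℂ] H}, A ∈ M → c • A ∈ M
  mul_mem : ∀ {A B : H →L[ℂ] H}, A ∈ M → B ∈ M → A.comp B ∈ M
  isClosed : IsClosed M
  nondegenerate : Dense (↑(Submodule.span ℂ {u : H | ∃ A ∈ M, ∃ v : H, u = A v}) : Set H)
  approx_unit : ∃ C : ℝ, ∀ ε > (0 : ℝ), ∀ F : Finset (H →L[ℂ] H), ↑F ⊆ M →
    ∃ J ∈ M, ‖J‖ ≤ C ∧ ∀ A ∈ F, ‖J.comp A - A‖ ≤ ε ∧ ‖A.comp J - A‖ ≤ ε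

/-- A Hilbert module: a Banach module on a Hilbert space whose multiplier algebra is a
C*-algebra of operators (i.e. is moreover closed under adjoints). -/
structure IsHilbertModule (H : Type*) [NormedAddCommGroup H] [InnerProductSpace ℂ H]
    [CompleteSpace H] (M : Set (H →L[ℂ] H)) extends IsBanachModule H M : Prop where
  star_mem : ∀ {A : H →L[ℂ] H}, A ∈ M → ContinuousLinearMap.adjoint A ∈ M

/-- `B₀ˡ(H,K)`: the closed linear span of the operators `A ∘ T` with `A` in the multiplier
algebra of `K` and `T ∈ B(H,K)` (operators left vanishing at infinity). -/
def B0l [NormedAddCommGroup H] [NormedSpace ℂ H] [NormedAddCommGroup K] [NormedSpace ℂ K]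
    (MK : Set (K →L[ℂ] K)) : Set (H →L[ℂ] K) :=
  closure (↑(Submodule.span ℂ
    {S : H →L[ℂ] K | ∃ A ∈ MK, ∃ T : H →L[ℂ] K, S = A.comp T}) : Set (H →L[ℂ] K))

/-- `B₀ʳ(H,K)`: the closed linear span of the operators `T ∘ A` with `A` in the multiplier
algebra of `H` and `T ∈ B(H,K)` (operators right vanishing at infinity). -/
def B0r [NormedAddCommGroup H] [NormedSpace ℂ H] [NormedAddCommGroup K] [NormedSpace ℂ K]
    (MH : Set (H →L[ℂ] H)) : Set (H →L[ℂ] K) :=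
  closure (↑(Submodule.span ℂ
    {S : H →L[ℂ] K | ∃ A ∈ MH, ∃ T : H →L[ℂ] K, S = T.comp A}) : Set (H →L[ℂ] K))

/-- `S ∈ B(H,K)` is left decay preserving. -/
def LeftDecayPreserving [NormedAddCommGroup H] [NormedSpace ℂ H] [NormedAddCommGroup K]
    [NormedSpace ℂ K] (MH : Set (H →L[ℂ] H)) (MK : Set (K →L[ℂ] K))
    (S : H →L[ℂ] K) : Prop :=
  ∀ A ∈ MH, S.comp A ∈ B0l MK

/-- `S ∈ B(H,K)` is right decay preserving. -/
def RightDecayPreserving [NormedAddCommGroup H] [NormedSpace ℂ H] [NormedAddCommGroup K]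
    [NormedSpace ℂ K] (MH : Set (H →L[ℂ] H)) (MK : Set (K →L[ℂ] K))
    (S : H →L[ℂ] K) : Prop :=
  ∀ A ∈ MK, A.comp S ∈ B0r MH

/-- Let `(H, M)` be a Banach module and `G` a Banach space continuously
embedded in `H` (via an injective continuous linear map `i`) such that each `A ∈ M`
restricts to a compact operator `G → H`.  If `R ∈ B₀ˡ(H,H)` and `R H ⊆ G`, then `R` is a
compact operator on `H`. -/
theorem stmt1 {H G : Type*} [NormedAddCommGroup H] [NormedSpace ℂ H] [CompleteSpace H]
    [NormedAddCommGroup G] [NormedSpace ℂ G] [CompleteSpace G]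
    (M : Set (H →L[ℂ] H)) (hM : IsBanachModule H M)
    (i : G →L[ℂ] H) (hi : Function.Injective i)
    (hcomp : ∀ A ∈ M, IsCompactOperator (⇑(A.comp i)))
    (R : H →L[ℂ] H) (hR : R ∈ B0l (H := H) M)
    (hran : ∀ v : H, ∃ g : G, i g = R v) :
    IsCompactOperator (⇑R) := by
  classical
  choose f hf using hran
  -- `f` is linear
  let F0 : H →ₗ[ℂ] G :=
    { toFun := f
      map_add' := fun x y => hi (by simp only [hf, map_add])
      map_smul' := fun c x => hi (by simp only [hf, map_smul, RingHom.id_apply]) }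
  have hF0 : ∀ v, i (F0 v) = R v := hf
  -- closed graph theorem: `F0` is continuous
  have hFc : Continuous F0 := by
    apply F0.continuous_of_seq_closed_graph
    intro u x y hu hy
    apply hi
    have h1 : Filter.Tendsto (fun n => i (F0 (u n))) Filter.atTop (nhds (i y)) :=
      (i.continuous.tendsto y).comp hy
    have h2 : (fun n => i (F0 (u n))) = fun n => R (u n) := funext fun n => hF0 _
    have h3 : Filter.Tendsto (fun n => R (u n)) Filter.atTop (nhds (R x)) :=
      (R.continuous.tendsto x).comp hu
    rw [h2] at h1
    rw [tendsto_nhds_unique h1 h3, hF0 x]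
  let F : H →L[ℂ] G := ⟨F0, hFc⟩
  -- for `J ∈ M`, `J ∘ R` is compact
  have key : ∀ J ∈ M, IsCompactOperator (⇑(J.comp R)) := by
    intro J hJ
    have : ⇑(J.comp R) = ⇑(J.comp i) ∘ ⇑F := by
      ext v
      simp only [coe_comp', Function.comp_apply, ← hF0 v]
      rfl
    rw [this]
    exact (hcomp J hJ).comp_clm F
  -- extract the constant of the approximate unit
  obtain ⟨C, happrox⟩ := hM.approx_unit
  obtain ⟨J₀, -, hJ₀, -⟩ := happrox 1 one_pos ∅ (by simp)
  have hC : (0 : ℝ) ≤ C := le_trans (norm_nonneg _) hJ₀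
  -- it suffices to show `R` is in the closure of the compact operators
  have hclosed : IsClosed {T : H →L[ℂ] H | IsCompactOperator (⇑T)} :=
    isClosed_setOf_isCompactOperator
  have : R ∈ closure {T : H →L[ℂ] H | IsCompactOperator (⇑T)} := by
    rw [Metric.mem_closure_iff]
    intro ε hε
    -- choose `S` in the span close to `R`
    have hε' : 0 < ε / (2 * (C + 1)) := by positivity
    obtain ⟨S, hSspan, hSd⟩ := Metric.mem_closure_iff.mp hR _ hε'
    obtain ⟨n, c, g, hSsum⟩ := Submodule.mem_span_set'.mp hSspan
    -- get the representation `S = ∑ (A j) ∘ (T j)` with `A j ∈ M`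
    choose A hA T hT using fun j => (g j).2
    set T' : Fin n → H →L[ℂ] H := fun j => c j • T j with hT'
    have hSrep : S = ∑ j, (A j).comp (T' j) := by
      rw [← hSsum]
      refine Finset.sum_congr rfl fun j _ => ?_
      rw [hT j]
      ext v
      simp [T', map_smul]
    -- apply the approximate unit to the finite set of the `A j`
    set ε' : ℝ := (ε / 2) / (∑ j, ‖T' j‖ + 1) with hε'def
    have hsumT : (0:ℝ) ≤ ∑ j, ‖T' j‖ := Finset.sum_nonneg fun j _ => norm_nonneg _
    have hε'pos : 0 < ε' := by positivity
    obtain ⟨J, hJM, hJC, hJap⟩ := happrox ε' hε'pos (Finset.image A Finset.univ)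
      (by intro x hx; simp only [Finset.coe_image, Set.mem_image] at hx
          obtain ⟨j, -, rfl⟩ := hx; exact hA j)
    refine ⟨J.comp R, key J hJM, ?_⟩
    -- estimate `‖J ∘ S - S‖`
    have hJS : ‖J.comp S - S‖ ≤ ε / 2 := by
      have heq : J.comp S - S = ∑ j, ((J.comp (A j) - A j).comp (T' j)) := by
        rw [hSrep]
        ext v
        simp [Finset.sum_sub_distrib]
      rw [heq]
      calc ‖∑ j, ((J.comp (A j) - A j).comp (T' j))‖
          ≤ ∑ j, ‖(J.comp (A j) - A j).comp (T' j)‖ := norm_sum_le _ _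
        _ ≤ ∑ j, ε' * ‖T' j‖ := by
            refine Finset.sum_le_sum fun j _ => ?_
            refine le_trans (opNorm_comp_le _ _) ?_
            have := (hJap (A j) (Finset.mem_image_of_mem A (Finset.mem_univ j))).1
            exact mul_le_mul_of_nonneg_right this (norm_nonneg _)
        _ = ε' * ∑ j, ‖T' j‖ := by rw [Finset.mul_sum]
        _ ≤ ε' * (∑ j, ‖T' j‖ + 1) := by
            exact mul_le_mul_of_nonneg_left (by linarith) hε'pos.le
        _ = ε / 2 := by
            rw [hε'def]
            field_simp
    -- combine
    have hdist : dist R S = ‖R - S‖ := dist_eq_norm R S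
    have hd : ‖R - S‖ < ε / (2 * (C + 1)) := by rw [← hdist]; exact hSd
    have h1 : ‖J.comp (S - R)‖ ≤ C * ‖R - S‖ := by
      refine le_trans (opNorm_comp_le _ _) ?_
      rw [norm_sub_rev]
      exact mul_le_mul_of_nonneg_right hJC (norm_nonneg _)
    have hfinal : ‖R - J.comp R‖ < ε := by
      have hsplit : R - J.comp R = (R - S) + (S - J.comp S) + (J.comp S - J.comp R) := by
        abel
      have h2 : J.comp S - J.comp R = J.comp (S - R) := by rw [comp_sub]
      calc ‖R - J.comp R‖ ≤ ‖R - S‖ + ‖S - J.comp S‖ + ‖J.comp S - J.comp R‖ := by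
            rw [hsplit]
            exact norm_add₃_le
        _ ≤ ‖R - S‖ + ε / 2 + C * ‖R - S‖ := by
            have hJS' : ‖S - J.comp S‖ ≤ ε / 2 := by rw [norm_sub_rev]; exact hJS
            rw [h2]
            exact add_le_add (add_le_add le_rfl hJS') h1
        _ = (C + 1) * ‖R - S‖ + ε / 2 := by ring
        _ < (C + 1) * (ε / (2 * (C + 1))) + ε / 2 := by
            have hC1 : (0:ℝ) < C + 1 := by linarith
            gcongr
        _ = ε := by field_simp; ring
    rw [dist_eq_norm]; exact hfinal
  have hmem : R ∈ {T : H →L[ℂ] H | IsCompactOperator ⇑T} := hclosed.closure_eq ▸ this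
  exact hmem

end
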